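/- arXiv:0811.0507 — 5 statements merged into one kernel-verified Lean document; each statement's English description precedes it below -/
import Mathlib

section
/- For the type B_m Weyl group W (signed permutations) acting on ℝ^m, Σ_{w ∈ W} det(w) exp(⟨x, w y⟩) = det[exp(x_i y_j) - exp(-x_i y_j)]_{i,j=1}^m = det[2 sinh(x_i y_j)]_{i,j=1}^m for all x, y ∈ ℝ^m. -/
open Matrix

lemma key_prod (m : ℕ) (u v : Fin m → ℝ) :
    ∑ ε : Fin m → Bool,
        (∏ i, (if ε i then (1 : ℝ) else -1)) *
          Real.exp (∑ i, u i * ((if ε i then (1 : ℝ) else -1) * v i))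
      = ∏ i, (Real.exp (u i * v i) - Real.exp (-(u i * v i))) := by
  have h1 : ∀ ε : Fin m → Bool,
      (∏ i, (if ε i then (1 : ℝ) else -1)) *
        Real.exp (∑ i, u i * ((if ε i then (1 : ℝ) else -1) * v i))
      = ∏ i, ((if ε i then (1 : ℝ) else -1) *
          Real.exp (u i * ((if ε i then (1 : ℝ) else -1) * v i))) := by
    intro ε
    rw [Real.exp_sum, Finset.prod_mul_distrib]
  simp_rw [h1]
  have h2 : ∀ i : Fin m, (Real.exp (u i * v i) - Real.exp (-(u i * v i)))
      = ∑ b : Bool, ((if b then (1 : ℝ) else -1) *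
          Real.exp (u i * ((if b then (1 : ℝ) else -1) * v i))) := by
    intro i
    rw [Fintype.sum_bool]
    simp
    ring_nf
  simp_rw [h2]
  rw [Finset.prod_univ_sum, Fintype.piFinset_univ]

/-- For the type `B_m` Weyl group of signed permutations `w = (σ, ε)`, acting by
`(w y) i = ε i * y (σ⁻¹ i)` with `det w = sign σ * ∏ ε i`, one has
`∑_{w} det w * exp ⟨x, w y⟩ = det [exp (xᵢ yⱼ) - exp (-xᵢ yⱼ)] = det [2 sinh (xᵢ yⱼ)]`. -/
theorem typeB_weyl_sum_det (m : ℕ) (x y : Fin m → ℝ) :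
    (∑ σ : Equiv.Perm (Fin m), ∑ ε : Fin m → Bool,
        ((Equiv.Perm.sign σ : ℤ) : ℝ) * (∏ i, (if ε i then (1 : ℝ) else -1)) *
          Real.exp (∑ i, x i * ((if ε i then (1 : ℝ) else -1) * y (σ⁻¹ i))))
      = (Matrix.of fun i j : Fin m =>
          Real.exp (x i * y j) - Real.exp (-(x i * y j))).det ∧
    (Matrix.of fun i j : Fin m =>
        Real.exp (x i * y j) - Real.exp (-(x i * y j))).det
      = (Matrix.of fun i j : Fin m => 2 * Real.sinh (x i * y j)).det := by
  constructor
  · rw [Matrix.det_apply]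
    refine Finset.sum_congr rfl fun σ _ => ?_
    simp_rw [mul_assoc, ← Finset.mul_sum]
    have reidx :
        (∑ ε : Fin m → Bool,
          (∏ i, (if ε i then (1 : ℝ) else -1)) *
            Real.exp (∑ i, x i * ((if ε i then (1 : ℝ) else -1) * y (σ⁻¹ i))))
        = ∑ ε : Fin m → Bool,
          (∏ i, (if ε i then (1 : ℝ) else -1)) *
            Real.exp (∑ i, x (σ i) * ((if ε i then (1 : ℝ) else -1) * y i)) := by
      refine (Fintype.sum_equiv (Equiv.arrowCongr σ (Equiv.refl Bool)) _ _
        fun ε => ?_).symm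
      have hp := Equiv.prod_comp σ (fun i => if ε (σ⁻¹ i) then (1 : ℝ) else -1)
      simp only [Equiv.Perm.inv_def, Equiv.symm_apply_apply] at hp
      have hs := Equiv.sum_comp σ
        (fun i => x i * ((if ε (σ⁻¹ i) then (1 : ℝ) else -1) * y (σ⁻¹ i)))
      simp only [Equiv.Perm.inv_def, Equiv.symm_apply_apply] at hs
      simp only [Equiv.arrowCongr_apply, Function.comp, Equiv.coe_refl, id, Equiv.Perm.inv_def]
      rw [hp, hs]
    rw [reidx, key_prod m (fun i => x (σ i)) y]
    simp [Matrix.of_apply, Units.smul_def, zsmul_eq_mul]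
  · have hM : (Matrix.of fun i j : Fin m =>
        Real.exp (x i * y j) - Real.exp (-(x i * y j)))
        = (Matrix.of fun i j : Fin m => 2 * Real.sinh (x i * y j)) := by
      ext i j
      simp [Real.sinh_eq]
      ring
    rw [hM]
end

section
/- For the type D_m Weyl group W^D (permutations combined with an even number of sign changes) acting on ℝ^m, Σ_{w ∈ W^D} det(w) exp(⟨x, w y⟩) = (1/2)( det[exp(x_i y_j) - exp(-x_i y_j)]_{i,j} + det[exp(x_i y_j) + exp(-x_i y_j)]_{i,j} ). -/
open Finset

/-- For the type `D_m` Weyl group of signed permutations with an even number of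
sign changes, `∑_{w ∈ W^D} det w * exp ⟨x, w y⟩` equals half the sum of
`det [exp (xᵢ yⱼ) - exp (-xᵢ yⱼ)]` and `det [exp (xᵢ yⱼ) + exp (-xᵢ yⱼ)]`. -/
theorem typeD_weyl_sum_det (m : ℕ) (x y : Fin m → ℝ) :
    (∑ σ : Equiv.Perm (Fin m), ∑ ε : Fin m → Bool,
        if Even ((Finset.univ.filter fun i : Fin m => ε i = false).card) then
          ((Equiv.Perm.sign σ : ℤ) : ℝ) * (∏ i, (if ε i then (1 : ℝ) else -1)) *
            Real.exp (∑ i, x i * ((if ε i then (1 : ℝ) else -1) * y (σ⁻¹ i)))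
        else 0)
      = (1 / 2) *
        ((Matrix.of fun i j : Fin m =>
            Real.exp (x i * y j) - Real.exp (-(x i * y j))).det +
         (Matrix.of fun i j : Fin m =>
            Real.exp (x i * y j) + Real.exp (-(x i * y j))).det) := by
  have hdet : ∀ (M : Matrix (Fin m) (Fin m) ℝ),
      M.det = ∑ σ : Equiv.Perm (Fin m),
        ((Equiv.Perm.sign σ : ℤ) : ℝ) * ∏ i, M i (σ i) := by
    intro M
    rw [← Matrix.det_transpose, Matrix.det_apply']
    rfl
  rw [hdet, hdet]
  -- reindex σ ↦ σ⁻¹ on the LHS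
  rw [← Equiv.sum_comp (Equiv.inv (Equiv.Perm (Fin m)))
    (fun σ : Equiv.Perm (Fin m) => ∑ ε : Fin m → Bool,
        if Even ((Finset.univ.filter fun i : Fin m => ε i = false).card) then
          ((Equiv.Perm.sign σ : ℤ) : ℝ) * (∏ i, (if ε i then (1 : ℝ) else -1)) *
            Real.exp (∑ i, x i * ((if ε i then (1 : ℝ) else -1) * y (σ⁻¹ i)))
        else 0)]
  rw [mul_add, Finset.mul_sum, Finset.mul_sum, ← Finset.sum_add_distrib]
  refine Finset.sum_congr rfl fun σ _ => ?_
  simp only [Equiv.inv_apply, inv_inv, Equiv.Perm.sign_inv]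
  -- expand the two products over sums of Bool
  have hexp1 : (∏ i, ((Matrix.of fun i j : Fin m =>
        Real.exp (x i * y j) - Real.exp (-(x i * y j))) i (σ i)))
      = ∑ ε : Fin m → Bool, ∏ i,
          (if ε i then (1:ℝ) else -1) *
            Real.exp ((if ε i then (1:ℝ) else -1) * (x i * y (σ i))) := by
    have h1 : ∀ i : Fin m, ((Matrix.of fun i j : Fin m =>
          Real.exp (x i * y j) - Real.exp (-(x i * y j))) i (σ i))
        = ∑ b : Bool, (if b then (1:ℝ) else -1) *
            Real.exp ((if b then (1:ℝ) else -1) * (x i * y (σ i))) := by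
      intro i; simp [Fintype.sum_bool, Matrix.of_apply]; ring
    rw [Finset.prod_congr rfl fun i _ => h1 i, Finset.prod_univ_sum,
      Fintype.piFinset_univ]
  have hexp2 : (∏ i, ((Matrix.of fun i j : Fin m =>
        Real.exp (x i * y j) + Real.exp (-(x i * y j))) i (σ i)))
      = ∑ ε : Fin m → Bool, ∏ i,
          Real.exp ((if ε i then (1:ℝ) else -1) * (x i * y (σ i))) := by
    have h1 : ∀ i : Fin m, ((Matrix.of fun i j : Fin m =>
          Real.exp (x i * y j) + Real.exp (-(x i * y j))) i (σ i))
        = ∑ b : Bool, Real.exp ((if b then (1:ℝ) else -1) * (x i * y (σ i))) := by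
      intro i; simp [Fintype.sum_bool, Matrix.of_apply]
    rw [Finset.prod_congr rfl fun i _ => h1 i, Finset.prod_univ_sum,
      Fintype.piFinset_univ]
  rw [hexp1, hexp2, Finset.mul_sum, Finset.mul_sum, Finset.mul_sum, Finset.mul_sum,
    ← Finset.sum_add_distrib]
  refine Finset.sum_congr rfl fun ε _ => ?_
  -- pointwise identity
  set S : ℝ := ((Equiv.Perm.sign σ : ℤ) : ℝ) with hS
  have hP : (∏ i, (if ε i then (1 : ℝ) else -1))
      = (-1) ^ ((Finset.univ.filter fun i : Fin m => ε i = false).card) := by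
    rw [Finset.prod_ite (f := fun _ => (1:ℝ)) (g := fun _ => (-1:ℝ))]
    simp [Bool.not_eq_true, Finset.prod_const]
  have hsplit : (∏ i, (if ε i then (1:ℝ) else -1) *
        Real.exp ((if ε i then (1:ℝ) else -1) * (x i * y (σ i))))
      = (∏ i, (if ε i then (1:ℝ) else -1)) *
        ∏ i, Real.exp ((if ε i then (1:ℝ) else -1) * (x i * y (σ i))) :=
    Finset.prod_mul_distrib
  have hE : Real.exp (∑ i, x i * ((if ε i then (1 : ℝ) else -1) * y (σ i)))
      = ∏ i, Real.exp ((if ε i then (1:ℝ) else -1) * (x i * y (σ i))) := by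
    rw [Real.exp_sum]
    refine Finset.prod_congr rfl fun i _ => ?_
    ring_nf
  rw [hsplit, hE]
  by_cases h : Even ((Finset.univ.filter fun i : Fin m => ε i = false).card)
  · rw [if_pos h]
    have : (∏ i, (if ε i then (1 : ℝ) else -1)) = 1 := by
      rw [hP, Even.neg_one_pow h]
    rw [this]
    ring
  · rw [if_neg h]
    have : (∏ i, (if ε i then (1 : ℝ) else -1)) = -1 := by
      rw [hP, Odd.neg_one_pow (Nat.not_even_iff_odd.mp h)]
    rw [this]
    ring
end

section
/- The function h(y) = Π_{α ∈ R_+} ⟨α, y⟩, where R_+ is the positive system of type A_{m-1} (so h is the Vandermonde polynomial Π_{i<j}(y_i - y_j)), is harmonic on ℝ^m: Δh = 0. -/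
open Finset

namespace VandAux

open Polynomial

variable {m : ℕ}

/-- positive system pairs -/
def S (m : ℕ) : Finset (Fin m × Fin m) := Finset.univ.filter fun p => p.1 < p.2

noncomputable def dd (x : Fin m → ℝ) (p : Fin m × Fin m) : ℝ := x p.1 - x p.2

noncomputable def L (x : Fin m → ℝ) (i : Fin m) (p : Fin m × Fin m) : Polynomial ℝ :=
  (if p.1 = i then X else C (x p.1)) - (if p.2 = i then X else C (x p.2))

noncomputable def ee (i : Fin m) (p : Fin m × Fin m) : ℝ :=
  (if p.1 = i then 1 else 0) - (if p.2 = i then 1 else 0)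

noncomputable def sg (i j : Fin m) : ℝ := if i < j then 1 else -1

def sp (i j : Fin m) : Fin m × Fin m := if i < j then (i, j) else (j, i)

lemma derivative_L (x : Fin m → ℝ) (i : Fin m) (p : Fin m × Fin m) :
    derivative (L x i p) = C (ee i p) := by
  unfold L ee
  split_ifs <;> simp

lemma eval_L (x : Fin m → ℝ) (i : Fin m) (p : Fin m × Fin m) :
    eval (x i) (L x i p) = dd x p := by
  unfold L dd
  split_ifs with h1 h2 h2 <;> simp_all

lemma derivative_finset_prod {ι : Type*} [DecidableEq ι] (s : Finset ι) (f : ι → Polynomial ℝ) :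
    derivative (∏ b ∈ s, f b) = ∑ b ∈ s, (∏ a ∈ s.erase b, f a) * derivative (f b) := by
  induction s using Finset.induction_on with
  | empty => simp
  | insert a s ha ih =>
    rw [Finset.prod_insert ha, derivative_mul, ih, Finset.sum_insert ha, Finset.erase_insert ha,
      Finset.mul_sum]
    rw [mul_comm (derivative (f a))]
    congr 1
    refine Finset.sum_congr rfl fun b hb => ?_
    have hba : b ≠ a := fun h => ha (h ▸ hb)
    rw [Finset.erase_insert_of_ne hba.symm, Finset.prod_insert
      (fun h => ha (Finset.erase_subset _ _ h))]
    ring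


lemma stepA (x : Fin m → ℝ) (i : Fin m) :
    iteratedDeriv 2
      (fun s => ∏ p ∈ S m, (Function.update x i s p.1 - Function.update x i s p.2)) (x i)
      = ∑ p ∈ S m, ee i p *
          ∑ q ∈ (S m).erase p, ee i q * ∏ r ∈ ((S m).erase p).erase q, dd x r := by
  have hfun : (fun s => ∏ p ∈ S m, (Function.update x i s p.1 - Function.update x i s p.2))
      = fun s => (∏ p ∈ S m, L x i p).eval s := by
    funext s
    rw [eval_prod]
    refine Finset.prod_congr rfl fun p _ => ?_
    simp [L, Function.update_apply, apply_ite (eval s)]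
  rw [hfun]
  have h2 : iteratedDeriv 2 (fun s => (∏ p ∈ S m, L x i p).eval s)
      = fun t => (derivative (derivative (∏ p ∈ S m, L x i p))).eval t := by
    have h1 : ∀ Q : Polynomial ℝ, deriv (fun s => Q.eval s) = fun s => (derivative Q).eval s :=
      fun Q => funext fun s => Polynomial.deriv Q
    rw [show (2:ℕ) = 1+1 from rfl, iteratedDeriv_succ, iteratedDeriv_one, h1, h1]
  rw [h2]
  rw [derivative_finset_prod, map_sum]
  have h3 : ∀ p : Fin m × Fin m,
      derivative ((∏ a ∈ (S m).erase p, L x i a) * derivative (L x i p))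
      = (∑ q ∈ (S m).erase p, (∏ r ∈ ((S m).erase p).erase q, L x i r) * C (ee i q))
          * C (ee i p) := by
    intro p
    rw [derivative_L, derivative_mul, derivative_C, mul_zero, add_zero, derivative_finset_prod]
    congr 1
    exact Finset.sum_congr rfl fun q _ => by rw [derivative_L]
  simp only [h3, eval_finset_sum, eval_mul, eval_C, eval_prod, eval_L]
  refine Finset.sum_congr rfl fun p _ => ?_
  rw [Finset.sum_mul, Finset.mul_sum]
  refine Finset.sum_congr rfl fun q _ => ?_
  ring


lemma sp_mem_S {i j : Fin m} (h : j ≠ i) : sp i j ∈ S m := by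
  unfold sp S
  rcases lt_or_gt_of_ne h.symm with h1 | h1 <;> simp [h1, asymm h1]

lemma ee_sp {i j : Fin m} (h : j ≠ i) : ee i (sp i j) = sg i j := by
  unfold ee sp sg
  rcases lt_or_gt_of_ne h.symm with h1 | h1 <;>
    simp [h1, asymm h1, h, h1.ne, h1.ne']

lemma sp_inj {i j k : Fin m} (hj : j ≠ i) (hk : k ≠ i) (h : sp i j = sp i k) : j = k := by
  unfold sp at h
  rcases lt_or_gt_of_ne hj.symm with h1 | h1 <;> rcases lt_or_gt_of_ne hk.symm with h2 | h2 <;>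
    simp [h1, h2, asymm h1, asymm h2, Prod.ext_iff] at h <;> tauto

lemma sum_over (i : Fin m) (T : Finset (Fin m × Fin m)) (hT : ∀ p ∈ T, p.1 < p.2)
    (J : Finset (Fin m)) (hJ : ∀ j, j ∈ J ↔ j ≠ i ∧ sp i j ∈ T)
    (F : Fin m × Fin m → ℝ) :
    ∑ p ∈ T, ee i p * F p = ∑ j ∈ J, sg i j * F (sp i j) := by
  have hzero : ∀ p ∈ T, ee i p * F p ≠ 0 → p.1 = i ∨ p.2 = i := by
    intro p _ hne
    by_contra hcon
    push_neg at hcon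
    simp [ee, hcon.1, hcon.2] at hne
  have key : ∀ p ∈ Finset.filter (fun p : Fin m × Fin m => p.1 = i ∨ p.2 = i) T,
      ((if p.1 = i then p.2 else p.1) ≠ i) ∧ sp i (if p.1 = i then p.2 else p.1) = p := by
    intro p hp
    obtain ⟨hpT, hpi⟩ := Finset.mem_filter.1 hp
    have hlt := hT p hpT
    by_cases h1 : p.1 = i
    · have h2 : i < p.2 := h1 ▸ hlt
      rw [if_pos h1]
      refine ⟨h2.ne', ?_⟩
      unfold sp; rw [if_pos h2]
      exact Prod.ext h1.symm rfl
    · have h2 : p.2 = i := hpi.resolve_left h1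
      have h3 : ¬ i < p.1 := by rw [← h2]; exact asymm hlt
      rw [if_neg h1]
      refine ⟨h1, ?_⟩
      unfold sp; rw [if_neg h3]
      exact Prod.ext rfl h2.symm
  rw [← Finset.sum_filter_of_ne hzero]
  refine (Finset.sum_nbij' (j := fun p => if p.1 = i then p.2 else p.1)
      (i := fun j => sp i j) ?_ ?_ ?_ ?_ ?_).symm
  · intro j hj
    obtain ⟨hji, hsT⟩ := (hJ j).1 hj
    refine Finset.mem_filter.2 ⟨hsT, ?_⟩
    show (sp i j).1 = i ∨ (sp i j).2 = i
    unfold sp; split_ifs <;> simp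
  · intro p hp
    obtain ⟨hji, hsp⟩ := key p hp
    exact (hJ _).2 ⟨hji, hsp.symm ▸ (Finset.mem_filter.1 hp).1⟩
  · intro j hj
    obtain ⟨hji, _⟩ := (hJ j).1 hj
    show (if (sp i j).1 = i then (sp i j).2 else (sp i j).1) = j
    unfold sp
    rcases lt_or_gt_of_ne hji.symm with h1 | h1 <;> simp [h1, asymm h1, h1.ne, h1.ne']
  · intro p hp
    exact (key p hp).2
  · intro j hj
    obtain ⟨hji, _⟩ := (hJ j).1 hj
    rw [ee_sp hji]


lemma stepAB (x : Fin m → ℝ) (i : Fin m) :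
    (∑ p ∈ S m, ee i p * ∑ q ∈ (S m).erase p, ee i q * ∏ r ∈ ((S m).erase p).erase q, dd x r)
    = ∑ j ∈ Finset.univ.erase i, ∑ k ∈ (Finset.univ.erase i).erase j,
        sg i j * (sg i k * ∏ r ∈ ((S m).erase (sp i j)).erase (sp i k), dd x r) := by
  have hTS : ∀ p ∈ S m, p.1 < p.2 := fun p hp => (Finset.mem_filter.1 hp).2
  have hJ1 : ∀ j, j ∈ Finset.univ.erase i ↔ j ≠ i ∧ sp i j ∈ S m := by
    intro j
    constructor
    · intro hj
      have hji := (Finset.mem_erase.1 hj).1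
      exact ⟨hji, sp_mem_S hji⟩
    · intro ⟨hji, _⟩
      exact Finset.mem_erase.2 ⟨hji, Finset.mem_univ j⟩
  rw [sum_over i (S m) hTS (Finset.univ.erase i) hJ1]
  refine Finset.sum_congr rfl fun j hj => ?_
  have hji := (Finset.mem_erase.1 hj).1
  rw [← Finset.mul_sum]
  congr 1
  refine sum_over i ((S m).erase (sp i j)) (fun p hp => hTS p (Finset.mem_of_mem_erase hp))
    ((Finset.univ.erase i).erase j) ?_ _
  intro k
  constructor
  · intro hk
    have hkj := (Finset.mem_erase.1 hk).1
    have hki := (Finset.mem_erase.1 (Finset.mem_of_mem_erase hk)).1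
    refine ⟨hki, Finset.mem_erase.2 ⟨fun hc => hkj (sp_inj hki hji hc), sp_mem_S hki⟩⟩
  · intro ⟨hki, hmem⟩
    have hne := (Finset.mem_erase.1 hmem).1
    refine Finset.mem_erase.2 ⟨fun hc => hne (by rw [hc]), Finset.mem_erase.2 ⟨hki, Finset.mem_univ k⟩⟩


def V (m : ℕ) : Finset (Fin m × Fin m × Fin m) :=
  Finset.univ.filter fun v => v.1 ≠ v.2.1 ∧ v.1 ≠ v.2.2 ∧ v.2.1 ≠ v.2.2

lemma expand (f : Fin m → Fin m → Fin m → ℝ) :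
    (∑ i, ∑ j ∈ Finset.univ.erase i, ∑ k ∈ (Finset.univ.erase i).erase j, f i j k)
    = ∑ v ∈ V m, f v.1 v.2.1 v.2.2 := by
  rw [V, Finset.sum_filter, Fintype.sum_prod_type]
  refine Finset.sum_congr rfl fun i _ => ?_
  rw [Fintype.sum_prod_type]
  simp only [← Finset.filter_ne', Finset.filter_filter, Finset.sum_filter]
  refine Finset.sum_congr rfl fun j _ => ?_
  by_cases hji : j = i
  · simp [hji]
  · rw [if_pos hji]
    refine Finset.sum_congr rfl fun k _ => ?_
    by_cases h1 : k ≠ i ∧ k ≠ j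
    · rw [if_pos h1, if_pos ⟨Ne.symm hji, Ne.symm h1.1, Ne.symm h1.2⟩]
    · rw [if_neg h1, if_neg ?_]
      intro hc
      exact h1 ⟨Ne.symm hc.2.1, Ne.symm hc.2.2⟩


def sort3 : Fin m × Fin m × Fin m → Fin m × Fin m × Fin m := fun v =>
  if v.1 < v.2.1 then
    (if v.2.1 < v.2.2 then v else if v.1 < v.2.2 then (v.1, v.2.2, v.2.1)
      else (v.2.2, v.1, v.2.1))
  else
    (if v.1 < v.2.2 then (v.2.1, v.1, v.2.2) else if v.2.1 < v.2.2 then (v.2.1, v.2.2, v.1)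
      else (v.2.2, v.2.1, v.1))

def T3 (m : ℕ) : Finset (Fin m × Fin m × Fin m) :=
  Finset.univ.filter fun u => u.1 < u.2.1 ∧ u.2.1 < u.2.2

lemma fiber_eq {a b c : Fin m} (hab : a < b) (hbc : b < c) :
    (V m).filter (fun v => sort3 v = (a, b, c))
      = {(a,b,c), (a,c,b), (b,a,c), (b,c,a), (c,a,b), (c,b,a)} := by
  have hac : a < c := hab.trans hbc
  ext v
  obtain ⟨i, j, k⟩ := v
  simp only [Finset.mem_filter, V, Finset.mem_univ, true_and, Finset.mem_insert,
    Finset.mem_singleton]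
  constructor
  · rintro ⟨⟨hij, hik, hjk⟩, hs⟩
    rcases lt_or_gt_of_ne hij with h1 | h1
    · rcases lt_or_gt_of_ne hjk with h2 | h2
      · simp only [sort3, if_pos h1, if_pos h2, Prod.mk.injEq] at hs
        obtain ⟨e1, e2, e3⟩ := hs
        subst e1; subst e2; subst e3; tauto
      · rcases lt_or_gt_of_ne hik with h3 | h3
        · simp only [sort3, if_pos h1, if_neg (asymm h2), if_pos h3, Prod.mk.injEq] at hs
          obtain ⟨e1, e2, e3⟩ := hs
          subst e1; subst e2; subst e3; tauto
        · simp only [sort3, if_pos h1, if_neg (asymm h2), if_neg (asymm h3),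
            Prod.mk.injEq] at hs
          obtain ⟨e1, e2, e3⟩ := hs
          subst e1; subst e2; subst e3; tauto
    · rcases lt_or_gt_of_ne hik with h2 | h2
      · simp only [sort3, if_neg (asymm h1), if_pos h2, Prod.mk.injEq] at hs
        obtain ⟨e1, e2, e3⟩ := hs
        subst e1; subst e2; subst e3; tauto
      · rcases lt_or_gt_of_ne hjk with h3 | h3
        · simp only [sort3, if_neg (asymm h1), if_neg (asymm h2), if_pos h3,
            Prod.mk.injEq] at hs
          obtain ⟨e1, e2, e3⟩ := hs
          subst e1; subst e2; subst e3; tauto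
        · simp only [sort3, if_neg (asymm h1), if_neg (asymm h2), if_neg (asymm h3),
            Prod.mk.injEq] at hs
          obtain ⟨e1, e2, e3⟩ := hs
          subst e1; subst e2; subst e3; tauto
  · intro h
    rcases h with h | h | h | h | h | h <;> rw [Prod.ext_iff, Prod.ext_iff] at h <;>
        obtain ⟨e1, e2, e3⟩ := h <;> subst e1 <;> subst e2 <;> subst e3
    · exact ⟨⟨hab.ne, hac.ne, hbc.ne⟩, by simp [sort3, hab, hbc]⟩
    · exact ⟨⟨hac.ne, hab.ne, hbc.ne'⟩, by simp [sort3, hac, asymm hbc, hab]⟩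
    · exact ⟨⟨hab.ne', hbc.ne, hac.ne⟩, by simp [sort3, asymm hab, hbc]⟩
    · exact ⟨⟨hbc.ne, hab.ne', hac.ne'⟩, by simp [sort3, hbc, asymm hac, asymm hab]⟩
    · exact ⟨⟨hac.ne', hbc.ne', hab.ne⟩, by simp [sort3, asymm hac, asymm hbc, hab]⟩
    · exact ⟨⟨hbc.ne', hac.ne', hab.ne'⟩, by simp [sort3, asymm hbc, asymm hac, asymm hab]⟩


lemma sum_V_zero (x : Fin m → ℝ) :
    ∑ v ∈ V m, sg v.1 v.2.1 * (sg v.1 v.2.2 *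
      ∏ r ∈ ((S m).erase (sp v.1 v.2.1)).erase (sp v.1 v.2.2), dd x r) = 0 := by
  have hmaps : ∀ v ∈ V m, sort3 v ∈ T3 m := by
    intro v hv
    obtain ⟨i, j, k⟩ := v
    obtain ⟨hij, hik, hjk⟩ := (Finset.mem_filter.1 hv).2
    rcases lt_or_gt_of_ne hij with h1 | h1
    · rcases lt_or_gt_of_ne hjk with h2 | h2
      · simp [sort3, T3, h1, h2]
      · rcases lt_or_gt_of_ne hik with h3 | h3
        · simp [sort3, T3, h1, h2, h3, asymm h2, gt_iff_lt]
        · simp [sort3, T3, h1, h2, h3, asymm h2, asymm h3, gt_iff_lt]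
    · rcases lt_or_gt_of_ne hik with h2 | h2
      · simp [sort3, T3, h1, h2, asymm h1, gt_iff_lt]
      · rcases lt_or_gt_of_ne hjk with h3 | h3
        · simp [sort3, T3, h1, h2, h3, asymm h1, asymm h2, gt_iff_lt]
        · simp [sort3, T3, h1, h2, h3, asymm h1, asymm h2, asymm h3, gt_iff_lt]
  rw [← Finset.sum_fiberwise_of_maps_to hmaps]
  refine Finset.sum_eq_zero fun u hu => ?_
  obtain ⟨a, b, c⟩ := u
  obtain ⟨hab, hbc⟩ := (Finset.mem_filter.1 hu).2
  have hac : a < c := hab.trans hbc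
  rw [fiber_eq hab hbc]
  have h1 : ((b, c) : Fin m × Fin m) ∈ ((S m).erase (a, b)).erase (a, c) := by
    simp [S, Finset.mem_erase, Prod.ext_iff, hbc, hab.ne']
  have h2 : ((a, c) : Fin m × Fin m) ∈ ((S m).erase (a, b)).erase (b, c) := by
    simp [S, Finset.mem_erase, Prod.ext_iff, hac, hab.ne, hbc.ne']
  have h3 : ((a, b) : Fin m × Fin m) ∈ ((S m).erase (a, c)).erase (b, c) := by
    simp [S, Finset.mem_erase, Prod.ext_iff, hab, hab.ne, hbc.ne]
  set N := ∏ r ∈ (((S m).erase (a, b)).erase (a, c)).erase (b, c), dd x r with hN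
  have e1 : ∏ r ∈ ((S m).erase (a, b)).erase (a, c), dd x r = dd x (b, c) * N :=
    (Finset.mul_prod_erase _ _ h1).symm
  have e2 : ∏ r ∈ ((S m).erase (a, c)).erase (a, b), dd x r = dd x (b, c) * N := by
    rw [Finset.erase_right_comm]; exact e1
  have e3 : ∏ r ∈ ((S m).erase (a, b)).erase (b, c), dd x r = dd x (a, c) * N := by
    rw [← Finset.mul_prod_erase _ _ h2, Finset.erase_right_comm]
  have e4 : ∏ r ∈ ((S m).erase (b, c)).erase (a, b), dd x r = dd x (a, c) * N := by
    rw [Finset.erase_right_comm]; exact e3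
  have e5 : ∏ r ∈ ((S m).erase (a, c)).erase (b, c), dd x r = dd x (a, b) * N := by
    rw [← Finset.mul_prod_erase _ _ h3]
    refine congrArg _ (Finset.prod_congr ?_ fun _ _ => rfl)
    ext y
    simp only [Finset.mem_erase]
    tauto
  have e6 : ∏ r ∈ ((S m).erase (b, c)).erase (a, c), dd x r = dd x (a, b) * N := by
    rw [Finset.erase_right_comm]; exact e5
  have sab : sg a b = 1 := by unfold sg; exact if_pos hab
  have sac : sg a c = 1 := by unfold sg; exact if_pos hac
  have sbc : sg b c = 1 := by unfold sg; exact if_pos hbc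
  have sba : sg b a = -1 := by unfold sg; exact if_neg (asymm hab)
  have sca : sg c a = -1 := by unfold sg; exact if_neg (asymm hac)
  have scb : sg c b = -1 := by unfold sg; exact if_neg (asymm hbc)
  have pab : sp a b = (a, b) := by unfold sp; exact if_pos hab
  have pac : sp a c = (a, c) := by unfold sp; exact if_pos hac
  have pbc : sp b c = (b, c) := by unfold sp; exact if_pos hbc
  have pba : sp b a = (a, b) := by unfold sp; exact if_neg (asymm hab)
  have pca : sp c a = (a, c) := by unfold sp; exact if_neg (asymm hac)
  have pcb : sp c b = (b, c) := by unfold sp; exact if_neg (asymm hbc)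
  rw [Finset.sum_insert (by simp [Prod.ext_iff, hab.ne, hab.ne', hbc.ne, hbc.ne', hac.ne, hac.ne']),
    Finset.sum_insert (by simp [Prod.ext_iff, hab.ne, hab.ne', hbc.ne, hbc.ne', hac.ne, hac.ne']),
    Finset.sum_insert (by simp [Prod.ext_iff, hab.ne, hab.ne', hbc.ne, hbc.ne', hac.ne, hac.ne']),
    Finset.sum_insert (by simp [Prod.ext_iff, hab.ne, hab.ne', hbc.ne, hbc.ne', hac.ne, hac.ne']),
    Finset.sum_insert (by simp [Prod.ext_iff, hab.ne, hab.ne', hbc.ne, hbc.ne', hac.ne, hac.ne']),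
    Finset.sum_singleton]
  simp only [sab, sac, sbc, sba, sca, scb, pab, pac, pbc, pba, pca, pcb, e1, e2, e3, e4, e5, e6]
  simp only [dd]
  ring

end VandAux

/-- The Euclidean Laplacian, as the sum of second derivatives in each coordinate. -/
noncomputable def laplacian {m : ℕ} (f : (Fin m → ℝ) → ℝ) (x : Fin m → ℝ) : ℝ :=
  ∑ i, iteratedDeriv 2 (fun s => f (Function.update x i s)) (x i)

/-- The Vandermonde polynomial `∏_{i<j} (y i - y j)` (the product of the type `A`
positive roots `⟨e i - e j, y⟩`) is harmonic. -/
theorem vandermonde_harmonic (m : ℕ) (x : Fin m → ℝ) :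
    laplacian
      (fun y : Fin m → ℝ =>
        ∏ p ∈ Finset.univ.filter fun p : Fin m × Fin m => p.1 < p.2,
          (y p.1 - y p.2)) x = 0 := by
  unfold laplacian
  have key : ∀ i : Fin m,
      iteratedDeriv 2 (fun s => ∏ p ∈ VandAux.S m,
        (Function.update x i s p.1 - Function.update x i s p.2)) (x i)
      = ∑ j ∈ Finset.univ.erase i, ∑ k ∈ (Finset.univ.erase i).erase j,
          VandAux.sg i j * (VandAux.sg i k *
            ∏ r ∈ ((VandAux.S m).erase (VandAux.sp i j)).erase (VandAux.sp i k),
              VandAux.dd x r) :=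
    fun i => (VandAux.stepA x i).trans (VandAux.stepAB x i)
  refine Eq.trans (Finset.sum_congr rfl fun i _ => key i) ?_
  rw [VandAux.expand]
  exact VandAux.sum_V_zero x
end

section
/- The Vandermonde-of-squares polynomial h(y) = Π_{1 ≤ i < j ≤ m}(y_i^2 - y_j^2) is harmonic on ℝ^m. -/
open Finset

namespace VSH

variable {m : ℕ}

def S (m : ℕ) : Finset (Fin m × Fin m) := Finset.univ.filter fun p => p.1 < p.2

def G (x : Fin m → ℝ) (p : Fin m × Fin m) : ℝ := x p.1 ^ 2 - x p.2 ^ 2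

def g (x : Fin m → ℝ) (i : Fin m) (p : Fin m × Fin m) (s : ℝ) : ℝ :=
  (if p.1 = i then s else x p.1) ^ 2 - (if p.2 = i then s else x p.2) ^ 2

def cf (i : Fin m) (p : Fin m × Fin m) : ℝ :=
  (if p.1 = i then 1 else 0) - (if p.2 = i then 1 else 0)

def Dv (x : Fin m → ℝ) (i : Fin m) (p : Fin m × Fin m) : ℝ := cf i p * (2 * x i)

def E2 (x : Fin m → ℝ) (p q : Fin m × Fin m) : ℝ := ∏ r ∈ ((S m).erase p).erase q, G x r

def Val (x : Fin m → ℝ) (i : Fin m) : ℝ :=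
  ∑ p ∈ S m,
    ((∑ q ∈ (S m).erase p, E2 x p q * Dv x i q) * Dv x i p
      + (∏ q ∈ (S m).erase p, G x q) * (cf i p * 2))

/-! ### Analysis part -/

lemma g_eval (x : Fin m → ℝ) (i : Fin m) (p : Fin m × Fin m) : g x i p (x i) = G x p := by
  unfold g G
  split_ifs with h1 h2 h2 <;> simp [h1, h2]

lemma hasDerivAt_g (x : Fin m → ℝ) (i : Fin m) (p : Fin m × Fin m) (s : ℝ) :
    HasDerivAt (g x i p) (cf i p * (2 * s)) s := by
  unfold g cf
  rcases em (p.1 = i) with h1 | h1 <;> rcases em (p.2 = i) with h2 | h2 <;>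
    simp only [h1, h2, if_pos, if_neg, if_true, if_false, eq_self_iff_true, not_false_iff]
  · simp only [sub_self, zero_mul]; exact hasDerivAt_const s (0:ℝ)
  · simpa using ((hasDerivAt_pow 2 s).sub_const (x p.2 ^ 2))
  · have := (hasDerivAt_pow 2 s).const_sub (x p.1 ^ 2)
    refine this.congr_deriv ?_
    push_cast; ring
  · simp only [sub_self, zero_mul]; exact hasDerivAt_const s (x p.1 ^ 2 - x p.2 ^ 2)

lemma hasDerivAt_lin (c s : ℝ) : HasDerivAt (fun t : ℝ => c * (2 * t)) (c * 2) s := by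
  simpa using ((hasDerivAt_id s).const_mul (2:ℝ)).const_mul c

lemma hasDerivAt_F (x : Fin m → ℝ) (i : Fin m) (s : ℝ) :
    HasDerivAt (fun t => ∏ p ∈ S m, g x i p t)
      (∑ p ∈ S m, (∏ q ∈ (S m).erase p, g x i q s) * (cf i p * (2 * s))) s := by
  have := HasDerivAt.fun_finsetProd (u := S m) (f := fun p => g x i p)
    (f' := fun p => cf i p * (2 * s)) (x := s) (fun p _ => hasDerivAt_g x i p s)
  simpa [smul_eq_mul] using this

lemma deriv_F (x : Fin m → ℝ) (i : Fin m) :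
    deriv (fun t => ∏ p ∈ S m, g x i p t)
      = fun s => ∑ p ∈ S m, (∏ q ∈ (S m).erase p, g x i q s) * (cf i p * (2 * s)) :=
  funext fun s => (hasDerivAt_F x i s).deriv

lemma hasDerivAt_F1 (x : Fin m → ℝ) (i : Fin m) :
    HasDerivAt (fun s => ∑ p ∈ S m, (∏ q ∈ (S m).erase p, g x i q s) * (cf i p * (2 * s)))
      (Val x i) (x i) := by
  have key : ∀ p ∈ S m,
      HasDerivAt (fun s => (∏ q ∈ (S m).erase p, g x i q s) * (cf i p * (2 * s)))
        ((∑ q ∈ (S m).erase p, E2 x p q * Dv x i q) * Dv x i p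
          + (∏ q ∈ (S m).erase p, G x q) * (cf i p * 2)) (x i) := by
    intro p _
    have h1 : HasDerivAt (fun s => ∏ q ∈ (S m).erase p, g x i q s)
        (∑ q ∈ (S m).erase p,
          (∏ r ∈ ((S m).erase p).erase q, g x i r (x i)) * (cf i q * (2 * x i))) (x i) := by
      have := HasDerivAt.fun_finsetProd (u := (S m).erase p) (f := fun q => g x i q)
        (f' := fun q => cf i q * (2 * x i)) (x := x i) (fun q _ => hasDerivAt_g x i q (x i))
      simpa [smul_eq_mul] using this
    have h2 := hasDerivAt_lin (cf i p) (x i)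
    have := h1.mul h2
    refine this.congr_deriv ?_
    simp only [E2, g_eval, Dv]
  exact HasDerivAt.fun_sum key

lemma iter2 (x : Fin m → ℝ) (i : Fin m) :
    iteratedDeriv 2 (fun s => ∏ p ∈ S m, g x i p s) (x i) = Val x i := by
  rw [show (2:ℕ) = 1 + 1 from rfl, iteratedDeriv_succ, iteratedDeriv_one, deriv_F]
  exact (hasDerivAt_F1 x i).deriv

/-! ### Combinatorial part -/

lemma erase_comm' {α : Type*} [DecidableEq α] (s : Finset α) (a b : α) :
    (s.erase a).erase b = (s.erase b).erase a := by
  ext x; simp only [mem_erase]; tauto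

def pr (a b : Fin m) : Fin m × Fin m := if a < b then (a, b) else (b, a)
def sg (a b : Fin m) : ℝ := if a < b then 1 else -1

def E3 (x : Fin m → ℝ) (s u v : Fin m) : ℝ :=
  ∏ r ∈ (((S m).erase (pr s u)).erase (pr s v)).erase (pr u v), G x r

def tt (x : Fin m → ℝ) (s u v : Fin m) : ℝ :=
  if s ≠ u ∧ s ≠ v ∧ u ≠ v then sg s u * sg s v * (4 * x s ^ 2) * E2 x (pr s u) (pr s v) else 0

def uu (x : Fin m → ℝ) (s u v : Fin m) : ℝ :=
  if s ≠ u ∧ s ≠ v ∧ u ≠ v then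
    sg s u * sg s v * sg u v * (4 * x s ^ 2 * x u ^ 2) * E3 x s u v else 0

lemma pr_comm {a b : Fin m} (h : a ≠ b) : pr a b = pr b a := by
  unfold pr
  rcases lt_trichotomy a b with h1 | h1 | h1
  · rw [if_pos h1, if_neg (lt_asymm h1)]
  · exact absurd h1 h
  · rw [if_neg (lt_asymm h1), if_pos h1]

lemma sg_comm {a b : Fin m} (h : a ≠ b) : sg b a = -sg a b := by
  unfold sg
  rcases lt_trichotomy a b with h1 | h1 | h1
  · rw [if_pos h1, if_neg (lt_asymm h1)]
  · exact absurd h1 h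
  · rw [if_neg (lt_asymm h1), if_pos h1]; ring

lemma pr_mem {a b : Fin m} (h : a ≠ b) : pr a b ∈ S m := by
  unfold pr S
  rcases lt_trichotomy a b with h1 | h1 | h1
  · simp [h1]
  · exact absurd h1 h
  · simp [h1, lt_asymm h1]

lemma pr_ne {a b c d : Fin m} (h : a ≠ c) (h' : a ≠ d) : pr a b ≠ pr c d := by
  unfold pr
  split_ifs <;> intro h1 <;> rw [Prod.mk.injEq] at h1 <;> obtain ⟨h2, h3⟩ := h1 <;> simp_all

lemma sum_cf (p : Fin m × Fin m) : ∑ i, cf i p = 0 := by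
  unfold cf
  rw [Finset.sum_sub_distrib]
  simp [Finset.sum_ite_eq]

lemma sum_Dv_mul (x : Fin m → ℝ) (p q : Fin m × Fin m) :
    ∑ i, Dv x i q * Dv x i p =
      (if p.1 = q.1 then 4 * x q.1 ^ 2 else 0) - (if p.1 = q.2 then 4 * x q.2 ^ 2 else 0)
        - (if p.2 = q.1 then 4 * x q.1 ^ 2 else 0) + (if p.2 = q.2 then 4 * x q.2 ^ 2 else 0) := by
  have key : ∀ i : Fin m, Dv x i q * Dv x i p =
      (if q.1 = i then (if p.1 = i then 4 * x i ^ 2 else 0) else 0)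
      - (if q.1 = i then (if p.2 = i then 4 * x i ^ 2 else 0) else 0)
      - (if q.2 = i then (if p.1 = i then 4 * x i ^ 2 else 0) else 0)
      + (if q.2 = i then (if p.2 = i then 4 * x i ^ 2 else 0) else 0) := by
    intro i
    unfold Dv cf
    split_ifs <;> ring
  rw [Finset.sum_congr rfl fun i _ => key i]
  rw [Finset.sum_add_distrib, Finset.sum_sub_distrib, Finset.sum_sub_distrib]
  simp [Finset.sum_ite_eq]
  ring

lemma sum_S (f : Fin m × Fin m → ℝ) :
    ∑ p ∈ S m, f p = ∑ a, ∑ b, if a < b then f (a, b) else 0 := by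
  rw [S, Finset.sum_filter, ← Finset.univ_product_univ, Finset.sum_product]

lemma sum_erase' {α : Type*} [DecidableEq α] (s : Finset α) (p : α) (f : α → ℝ) :
    ∑ q ∈ s.erase p, f q = ∑ q ∈ s, if q = p then 0 else f q := by
  rw [← Finset.filter_ne', Finset.sum_filter]
  exact Finset.sum_congr rfl fun q _ => by split_ifs with h <;> simp_all

lemma A_zero (x : Fin m → ℝ) :
    ∑ i, ∑ p ∈ S m, (∏ q ∈ (S m).erase p, G x q) * (cf i p * 2) = 0 := by
  rw [Finset.sum_comm]
  refine Finset.sum_eq_zero fun p _ => ?_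
  have h : ∀ i : Fin m, (∏ q ∈ (S m).erase p, G x q) * (cf i p * 2)
      = ((∏ q ∈ (S m).erase p, G x q) * 2) * cf i p := fun i => by ring
  rw [Finset.sum_congr rfl fun i _ => h i, ← Finset.mul_sum, sum_cf, mul_zero]


lemma inner_sum (x : Fin m → ℝ) (a b : Fin m) (hab : a < b) :
    (∑ c : Fin m, ∑ d : Fin m, if c < d then
        (if (c, d) = (a, b) then 0 else
          E2 x (a, b) (c, d) *
            ((if a = c then 4 * x c ^ 2 else 0) - (if a = d then 4 * x d ^ 2 else 0)
              - (if b = c then 4 * x c ^ 2 else 0) + (if b = d then 4 * x d ^ 2 else 0)))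
        else 0)
    = (∑ v, if a < v ∧ v ≠ b then E2 x (a, b) (a, v) * (4 * x a ^ 2) else 0)
      - (∑ v, if v < a then E2 x (a, b) (v, a) * (4 * x a ^ 2) else 0)
      - (∑ v, if b < v then E2 x (a, b) (b, v) * (4 * x b ^ 2) else 0)
      + (∑ v, if v < b ∧ v ≠ a then E2 x (a, b) (v, b) * (4 * x b ^ 2) else 0) := by
  have hsplit : ∀ c d : Fin m, (if c < d then
        (if (c, d) = (a, b) then 0 else
          E2 x (a, b) (c, d) *
            ((if a = c then 4 * x c ^ 2 else 0) - (if a = d then 4 * x d ^ 2 else 0)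
              - (if b = c then 4 * x c ^ 2 else 0) + (if b = d then 4 * x d ^ 2 else 0)))
        else 0)
      = (if a = c then (if c < d then (if (c, d) = (a, b) then 0
            else E2 x (a, b) (c, d) * (4 * x c ^ 2)) else 0) else 0)
        - (if a = d then (if c < d then (if (c, d) = (a, b) then 0
            else E2 x (a, b) (c, d) * (4 * x d ^ 2)) else 0) else 0)
        - (if b = c then (if c < d then (if (c, d) = (a, b) then 0
            else E2 x (a, b) (c, d) * (4 * x c ^ 2)) else 0) else 0)
        + (if b = d then (if c < d then (if (c, d) = (a, b) then 0
            else E2 x (a, b) (c, d) * (4 * x d ^ 2)) else 0) else 0) := by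
    intro c d
    split_ifs <;> ring
  rw [Finset.sum_congr rfl fun c _ => Finset.sum_congr rfl fun d _ => hsplit c d]
  simp only [Finset.sum_sub_distrib, Finset.sum_add_distrib]
  have e1 : (∑ c : Fin m, ∑ d : Fin m, if a = c then (if c < d then (if (c, d) = (a, b) then 0
        else E2 x (a, b) (c, d) * (4 * x c ^ 2)) else 0) else 0)
      = ∑ v, if a < v ∧ v ≠ b then E2 x (a, b) (a, v) * (4 * x a ^ 2) else 0 := by
    rw [Finset.sum_comm]
    simp only [Finset.sum_ite_eq, Finset.mem_univ, if_true]
    refine Finset.sum_congr rfl fun v _ => ?_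
    by_cases h1 : a < v
    · by_cases h2 : v = b <;> simp [h1, h2, Prod.ext_iff]
    · simp [h1]
  have e2 : (∑ c : Fin m, ∑ d : Fin m, if a = d then (if c < d then (if (c, d) = (a, b) then 0
        else E2 x (a, b) (c, d) * (4 * x d ^ 2)) else 0) else 0)
      = ∑ v, if v < a then E2 x (a, b) (v, a) * (4 * x a ^ 2) else 0 := by
    simp only [Finset.sum_ite_eq, Finset.mem_univ, if_true]
    refine Finset.sum_congr rfl fun v _ => ?_
    by_cases h1 : v < a
    · simp [h1, Prod.ext_iff, ne_of_lt h1]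
    · simp [h1]
  have e3 : (∑ c : Fin m, ∑ d : Fin m, if b = c then (if c < d then (if (c, d) = (a, b) then 0
        else E2 x (a, b) (c, d) * (4 * x c ^ 2)) else 0) else 0)
      = ∑ v, if b < v then E2 x (a, b) (b, v) * (4 * x b ^ 2) else 0 := by
    rw [Finset.sum_comm]
    simp only [Finset.sum_ite_eq, Finset.mem_univ, if_true]
    refine Finset.sum_congr rfl fun v _ => ?_
    by_cases h1 : b < v
    · simp [h1, Prod.ext_iff, hab.ne']
    · simp [h1]
  have e4 : (∑ c : Fin m, ∑ d : Fin m, if b = d then (if c < d then (if (c, d) = (a, b) then 0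
        else E2 x (a, b) (c, d) * (4 * x d ^ 2)) else 0) else 0)
      = ∑ v, if v < b ∧ v ≠ a then E2 x (a, b) (v, b) * (4 * x b ^ 2) else 0 := by
    simp only [Finset.sum_ite_eq, Finset.mem_univ, if_true]
    refine Finset.sum_congr rfl fun v _ => ?_
    by_cases h1 : v < b
    · by_cases h2 : v = a <;> simp [h1, h2, Prod.ext_iff]
    · simp [h1]
  rw [e1, e2, e3, e4]

def k1 (x : Fin m → ℝ) (a b v : Fin m) : ℝ :=
  if a < b ∧ a < v ∧ v ≠ b then E2 x (a, b) (a, v) * (4 * x a ^ 2) else 0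
def k2 (x : Fin m → ℝ) (a b v : Fin m) : ℝ :=
  if a < b ∧ v < a then E2 x (a, b) (v, a) * (4 * x a ^ 2) else 0
def k3 (x : Fin m → ℝ) (a b v : Fin m) : ℝ :=
  if a < b ∧ b < v then E2 x (a, b) (b, v) * (4 * x b ^ 2) else 0
def k4 (x : Fin m → ℝ) (a b v : Fin m) : ℝ :=
  if a < b ∧ v < b ∧ v ≠ a then E2 x (a, b) (v, b) * (4 * x b ^ 2) else 0

lemma combine (x : Fin m → ℝ) (s u v : Fin m) :
    k1 x s u v - k2 x s u v - k3 x u s v + k4 x u s v = tt x s u v := by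
  unfold k1 k2 k3 k4 tt pr sg
  rcases lt_trichotomy s u with h1 | h1 | h1
  · rcases lt_trichotomy s v with h2 | h2 | h2
    · rcases eq_or_ne u v with rfl | h3
      · simp [h1, h2, lt_asymm h1, lt_asymm h2]
      · simp [h1, h2, lt_asymm h1, lt_asymm h2, ne_of_lt h1, ne_of_lt h2, h3, Ne.symm h3]
        ring
    · subst h2
      simp [h1, lt_asymm h1, lt_irrefl]
    · have hvu : v ≠ u := ne_of_lt (h2.trans h1)
      simp [h1, h2, lt_asymm h1, lt_asymm h2, ne_of_lt h1, ne_of_lt h2,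
        Ne.symm (ne_of_lt h2), hvu, Ne.symm hvu]
      ring
  · subst h1
    simp [lt_irrefl]
  · rcases lt_trichotomy s v with h2 | h2 | h2
    · have huv : u ≠ v := ne_of_lt (h1.trans h2)
      simp [h1, h2, lt_asymm h1, lt_asymm h2, ne_of_lt h1, ne_of_lt h2,
        Ne.symm (ne_of_lt h1), huv, Ne.symm huv]
      ring
    · subst h2
      simp [h1, lt_asymm h1, lt_irrefl]
    · rcases eq_or_ne v u with rfl | h3
      · simp [h1, h2, lt_asymm h1, lt_asymm h2, lt_irrefl]
      · simp [h1, h2, lt_asymm h1, lt_asymm h2, ne_of_lt h1, ne_of_lt h2,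
          Ne.symm (ne_of_lt h1), Ne.symm (ne_of_lt h2), h3, Ne.symm h3]
        ring
lemma G_pr (x : Fin m → ℝ) {u v : Fin m} (h : u ≠ v) :
    G x (pr u v) = sg u v * (x u ^ 2 - x v ^ 2) := by
  unfold G pr sg
  rcases lt_trichotomy u v with h1 | h1 | h1
  · simp [h1]
  · exact absurd h1 h
  · rw [if_neg (lt_asymm h1), if_neg (lt_asymm h1)]
    ring

lemma tt_eq (x : Fin m → ℝ) (s u v : Fin m) : tt x s u v = uu x s u v + uu x s v u := by
  unfold tt uu
  by_cases h : s ≠ u ∧ s ≠ v ∧ u ≠ v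
  · obtain ⟨h1, h2, h3⟩ := h
    rw [if_pos ⟨h1, h2, h3⟩, if_pos ⟨h1, h2, h3⟩, if_pos ⟨h2, h1, Ne.symm h3⟩]
    have hne1 : pr u v ≠ pr s v := pr_ne (Ne.symm h1) h3
    have hne2 : pr u v ≠ pr s u := by
      rw [pr_comm h3]
      exact pr_ne (Ne.symm h2) (Ne.symm h3)
    have hm : pr u v ∈ ((S m).erase (pr s u)).erase (pr s v) := by
      rw [Finset.mem_erase, Finset.mem_erase]
      exact ⟨hne1, hne2, pr_mem h3⟩
    have hE : E2 x (pr s u) (pr s v) = G x (pr u v) * E3 x s u v :=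
      (Finset.mul_prod_erase _ _ hm).symm
    have hE3 : E3 x s v u = E3 x s u v := by
      unfold E3
      rw [pr_comm (Ne.symm h3), erase_comm' ((S m) : Finset (Fin m × Fin m)) (pr s v) (pr s u)]
    have hsg : sg v u = -sg u v := sg_comm h3
    rw [hE, hE3, hsg, G_pr x h3]
    ring
  · rw [if_neg h, if_neg h, if_neg (fun h' => h ⟨h'.2.1, h'.1, Ne.symm h'.2.2⟩)]
    simp

lemma uu_anti (x : Fin m → ℝ) (s u v : Fin m) : uu x u s v = -uu x s u v := by
  unfold uu
  by_cases h : s ≠ u ∧ s ≠ v ∧ u ≠ v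
  · obtain ⟨h1, h2, h3⟩ := h
    rw [if_pos ⟨Ne.symm h1, h3, h2⟩, if_pos ⟨h1, h2, h3⟩]
    have hE3 : E3 x u s v = E3 x s u v := by
      unfold E3
      rw [← pr_comm h1, erase_comm' ((S m).erase (pr s u)) (pr u v) (pr s v)]
    rw [hE3, sg_comm h1]
    ring
  · rw [if_neg h, if_neg (fun h' => h ⟨Ne.symm h'.1, h'.2.2, h'.2.1⟩)]
    simp

lemma sum_uu (x : Fin m → ℝ) : ∑ s, ∑ u, ∑ v, uu x s u v = 0 := by
  have h : (∑ s, ∑ u, ∑ v, uu x s u v) = -∑ s, ∑ u, ∑ v, uu x s u v := by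
    calc (∑ s, ∑ u, ∑ v, uu x s u v)
        = ∑ s, ∑ u, ∑ v, uu x u s v := Finset.sum_comm
      _ = ∑ s, ∑ u, ∑ v, -uu x s u v :=
          Finset.sum_congr rfl fun a _ => Finset.sum_congr rfl fun b _ =>
            Finset.sum_congr rfl fun v _ => uu_anti x a b v
      _ = -∑ s, ∑ u, ∑ v, uu x s u v := by
          simp [Finset.sum_neg_distrib]
  linarith

lemma sum_tt (x : Fin m → ℝ) : ∑ s, ∑ u, ∑ v, tt x s u v = 0 := by
  have h1 : (∑ s, ∑ u, ∑ v, tt x s u v)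
      = (∑ s, ∑ u, ∑ v, uu x s u v) + ∑ s, ∑ u, ∑ v, uu x s v u := by
    simp only [← Finset.sum_add_distrib]
    exact Finset.sum_congr rfl fun a _ => Finset.sum_congr rfl fun b _ =>
      Finset.sum_congr rfl fun v _ => tt_eq x a b v
  have h2 : (∑ s : Fin m, ∑ u, ∑ v, uu x s v u) = ∑ s, ∑ u, ∑ v, uu x s u v :=
    Finset.sum_congr rfl fun a _ => Finset.sum_comm
  rw [h1, h2, sum_uu, add_zero]

lemma swap_iq (x : Fin m → ℝ) (p : Fin m × Fin m) :
    ∑ i, (∑ q ∈ (S m).erase p, E2 x p q * Dv x i q) * Dv x i p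
      = ∑ q ∈ (S m).erase p, E2 x p q * ∑ i, Dv x i q * Dv x i p := by
  calc ∑ i, (∑ q ∈ (S m).erase p, E2 x p q * Dv x i q) * Dv x i p
      = ∑ i, ∑ q ∈ (S m).erase p, E2 x p q * (Dv x i q * Dv x i p) := by
        refine Finset.sum_congr rfl fun i _ => ?_
        rw [Finset.sum_mul]
        exact Finset.sum_congr rfl fun q _ => by ring
    _ = ∑ q ∈ (S m).erase p, ∑ i, E2 x p q * (Dv x i q * Dv x i p) := Finset.sum_comm
    _ = _ := Finset.sum_congr rfl fun q _ => (Finset.mul_sum _ _ _).symm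

lemma B_eq (x : Fin m → ℝ) :
    ∑ i, ∑ p ∈ S m, (∑ q ∈ (S m).erase p, E2 x p q * Dv x i q) * Dv x i p
      = ∑ s, ∑ u, ∑ v, tt x s u v := by
  have stepA : (∑ i, ∑ p ∈ S m, (∑ q ∈ (S m).erase p, E2 x p q * Dv x i q) * Dv x i p)
      = ∑ a, ∑ b, ((((∑ v, k1 x a b v) - ∑ v, k2 x a b v) - ∑ v, k3 x a b v)
          + ∑ v, k4 x a b v) := by
    rw [Finset.sum_comm,
      sum_S (fun p => ∑ i, (∑ q ∈ (S m).erase p, E2 x p q * Dv x i q) * Dv x i p)]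
    refine Finset.sum_congr rfl fun a _ => Finset.sum_congr rfl fun b _ => ?_
    by_cases hab : a < b
    · rw [if_pos hab]
      calc (∑ i, (∑ q ∈ (S m).erase (a, b), E2 x (a, b) q * Dv x i q) * Dv x i (a, b))
          = ∑ q ∈ (S m).erase (a, b), E2 x (a, b) q * ∑ i, Dv x i q * Dv x i (a, b) :=
            swap_iq x (a, b)
        _ = ∑ q ∈ (S m).erase (a, b), E2 x (a, b) q *
              ((if a = q.1 then 4 * x q.1 ^ 2 else 0) - (if a = q.2 then 4 * x q.2 ^ 2 else 0)
                - (if b = q.1 then 4 * x q.1 ^ 2 else 0)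
                + (if b = q.2 then 4 * x q.2 ^ 2 else 0)) :=
            Finset.sum_congr rfl fun q _ => by rw [sum_Dv_mul]
        _ = ∑ q ∈ S m, if q = (a, b) then 0 else E2 x (a, b) q *
              ((if a = q.1 then 4 * x q.1 ^ 2 else 0) - (if a = q.2 then 4 * x q.2 ^ 2 else 0)
                - (if b = q.1 then 4 * x q.1 ^ 2 else 0)
                + (if b = q.2 then 4 * x q.2 ^ 2 else 0)) := sum_erase' _ _ _
        _ = ∑ c : Fin m, ∑ d : Fin m, if c < d then
              (if (c, d) = (a, b) then 0 else
                E2 x (a, b) (c, d) *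
                  ((if a = c then 4 * x c ^ 2 else 0) - (if a = d then 4 * x d ^ 2 else 0)
                    - (if b = c then 4 * x c ^ 2 else 0)
                    + (if b = d then 4 * x d ^ 2 else 0)))
              else 0 := sum_S _
        _ = (∑ v, if a < v ∧ v ≠ b then E2 x (a, b) (a, v) * (4 * x a ^ 2) else 0)
            - (∑ v, if v < a then E2 x (a, b) (v, a) * (4 * x a ^ 2) else 0)
            - (∑ v, if b < v then E2 x (a, b) (b, v) * (4 * x b ^ 2) else 0)
            + (∑ v, if v < b ∧ v ≠ a then E2 x (a, b) (v, b) * (4 * x b ^ 2) else 0) :=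
            inner_sum x a b hab
        _ = (((∑ v, k1 x a b v) - ∑ v, k2 x a b v) - ∑ v, k3 x a b v) + ∑ v, k4 x a b v := by
            unfold k1 k2 k3 k4
            congr 1
            · congr 1
              · congr 1
                · exact Finset.sum_congr rfl fun v _ => by simp [hab]
                · exact Finset.sum_congr rfl fun v _ => by simp [hab]
              · exact Finset.sum_congr rfl fun v _ => by simp [hab]
            · exact Finset.sum_congr rfl fun v _ => by simp [hab]
    · rw [if_neg hab]
      unfold k1 k2 k3 k4
      simp [hab]
  rw [stepA]
  have c3 : (∑ a, ∑ b, ∑ v, k3 x a b v) = ∑ a, ∑ b, ∑ v, k3 x b a v :=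
    Finset.sum_comm
  have c4 : (∑ a, ∑ b, ∑ v, k4 x a b v) = ∑ a, ∑ b, ∑ v, k4 x b a v :=
    Finset.sum_comm
  calc (∑ a, ∑ b, ((((∑ v, k1 x a b v) - ∑ v, k2 x a b v) - ∑ v, k3 x a b v) + ∑ v, k4 x a b v))
      = (((∑ a, ∑ b, ∑ v, k1 x a b v) - ∑ a, ∑ b, ∑ v, k2 x a b v)
          - ∑ a, ∑ b, ∑ v, k3 x a b v) + ∑ a, ∑ b, ∑ v, k4 x a b v := by
        simp [Finset.sum_sub_distrib, Finset.sum_add_distrib]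
    _ = (((∑ a, ∑ b, ∑ v, k1 x a b v) - ∑ a, ∑ b, ∑ v, k2 x a b v)
          - ∑ a, ∑ b, ∑ v, k3 x b a v) + ∑ a, ∑ b, ∑ v, k4 x b a v := by
        rw [c3, c4]
    _ = ∑ a, ∑ b, ∑ v, (k1 x a b v - k2 x a b v - k3 x b a v + k4 x b a v) := by
        simp [Finset.sum_sub_distrib, Finset.sum_add_distrib]
    _ = ∑ s, ∑ u, ∑ v, tt x s u v :=
        Finset.sum_congr rfl fun a _ => Finset.sum_congr rfl fun b _ =>
          Finset.sum_congr rfl fun v _ => combine x a b v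


lemma val_zero (x : Fin m → ℝ) : ∑ i, Val x i = 0 := by
  unfold Val
  rw [Finset.sum_congr rfl fun i (_ : i ∈ Finset.univ) => Finset.sum_add_distrib]
  rw [Finset.sum_add_distrib, B_eq x, sum_tt x, A_zero x, add_zero]

end VSH

/-- The Vandermonde-of-squares polynomial `∏_{i<j} (y i ^ 2 - y j ^ 2)` (the product
of the type `D_m` positive roots) is harmonic. -/
theorem vandermonde_sq_harmonic (m : ℕ) (x : Fin m → ℝ) :
    laplacian
      (fun y : Fin m → ℝ =>
        ∏ p ∈ Finset.univ.filter fun p : Fin m × Fin m => p.1 < p.2,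
          (y p.1 ^ 2 - y p.2 ^ 2)) x = 0 := by
  have hfun : ∀ i : Fin m,
      (fun s => (fun y : Fin m → ℝ =>
          ∏ p ∈ Finset.univ.filter fun p : Fin m × Fin m => p.1 < p.2,
            (y p.1 ^ 2 - y p.2 ^ 2)) (Function.update x i s))
        = fun s => ∏ p ∈ VSH.S m, VSH.g x i p s := by
    intro i
    funext s
    exact Finset.prod_congr rfl fun p _ => by
      simp [VSH.g, Function.update_apply]
  unfold laplacian
  calc (∑ i, iteratedDeriv 2
        (fun s => (fun y : Fin m → ℝ =>
          ∏ p ∈ Finset.univ.filter fun p : Fin m × Fin m => p.1 < p.2,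
            (y p.1 ^ 2 - y p.2 ^ 2)) (Function.update x i s)) (x i))
      = ∑ i, VSH.Val x i :=
        Finset.sum_congr rfl fun i _ =>
          (congrArg (fun F => iteratedDeriv 2 F (x i)) (hfun i)).trans (VSH.iter2 x i)
    _ = 0 := VSH.val_zero x
end

section
/- The polynomial h(y) = (Π_{i=1}^m y_i) · Π_{1 ≤ i < j ≤ m}(y_i^2 - y_j^2) is harmonic on ℝ^m. -/
open Finset Polynomial

namespace TypeBAux

variable {m : ℕ}

def sg (i j : Fin m) : ℝ := if i < j then 1 else -1

def pairs (m : ℕ) : Finset (Fin m × Fin m) := univ.filter fun p => p.1 < p.2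

def avoid (E : Finset (Fin m)) : Finset (Fin m × Fin m) :=
  (pairs m).filter fun p => p.1 ∉ E ∧ p.2 ∉ E

lemma sg_mul_self {i j : Fin m} : sg i j * sg i j = 1 := by
  unfold sg; split_ifs <;> norm_num

lemma sg_symm {i j : Fin m} (h : i ≠ j) : sg i j = -sg j i := by
  rcases h.lt_or_gt with h1 | h1
  · simp [sg, h1, lt_asymm h1]
  · simp [sg, h1, lt_asymm h1]

lemma avoid_empty : avoid (∅ : Finset (Fin m)) = pairs m := by
  simp [avoid]

lemma mem_avoid {E : Finset (Fin m)} {p : Fin m × Fin m} :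
    p ∈ avoid E ↔ p.1 < p.2 ∧ p.1 ∉ E ∧ p.2 ∉ E := by
  simp [avoid, pairs, and_assoc]

/-- split off the pairs containing `k` from the pairs avoiding `E`. -/
lemma pairs_split (F : Fin m × Fin m → ℝ) (E : Finset (Fin m)) (k : Fin m) (hk : k ∉ E) :
    ∏ p ∈ avoid E, F p =
      (∏ p ∈ avoid (insert k E), F p) *
        ∏ j ∈ univ \ insert k E, (if k < j then F (k, j) else F (j, k)) := by
  rw [← Finset.prod_filter_mul_prod_filter_not (avoid E) (fun p => p.1 ≠ k ∧ p.2 ≠ k) F]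
  congr 1
  · apply Finset.prod_congr _ fun _ _ => rfl
    ext p
    simp only [mem_filter, mem_avoid, mem_insert]
    tauto
  · apply Finset.prod_nbij' (fun p => if p.1 = k then p.2 else p.1)
      (fun j => if k < j then (k, j) else (j, k))
    · intro p hp
      simp only [mem_filter, mem_avoid, not_and_or, not_not] at hp
      obtain ⟨⟨hlt, h1, h2⟩, hc⟩ := hp
      simp only [mem_sdiff, mem_univ, true_and, mem_insert, not_or]
      split_ifs with h
      · exact ⟨fun hh => absurd (hh ▸ h ▸ hlt) (lt_irrefl _), h2⟩
      · rcases hc with hc | hc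
        · exact absurd hc h
        · exact ⟨fun hh => absurd (hc ▸ hh ▸ hlt) (lt_irrefl _), h1⟩
    · intro j hj
      simp only [mem_sdiff, mem_univ, true_and, mem_insert, not_or] at hj
      obtain ⟨hjk, hjE⟩ := hj
      simp only [mem_filter, mem_avoid, not_and_or, not_not]
      rcases lt_or_gt_of_ne (Ne.symm hjk) with h | h
      · rw [if_pos h]; exact ⟨⟨h, hk, hjE⟩, Or.inl rfl⟩
      · rw [if_neg (not_lt_of_gt h)]; exact ⟨⟨h, hjE, hk⟩, Or.inr rfl⟩
    · intro p hp
      simp only [mem_filter, mem_avoid, not_and_or, not_not] at hp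
      obtain ⟨⟨hlt, _, _⟩, hc⟩ := hp
      by_cases h1 : p.1 = k
      · subst h1; rw [if_pos rfl, if_pos hlt]
      · rcases hc with hc | hc
        · exact absurd hc h1
        · subst hc; rw [if_neg h1, if_neg (not_lt_of_gt hlt)]
    · intro j hj
      simp only [mem_sdiff, mem_univ, true_and, mem_insert, not_or] at hj
      rcases lt_or_gt_of_ne (Ne.symm hj.1) with h | h
      · rw [if_pos h]; simp
      · rw [if_neg (not_lt_of_gt h)]; simp [if_neg hj.1]
    · intro p hp
      simp only [mem_filter, mem_avoid, not_and_or, not_not] at hp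
      obtain ⟨⟨hlt, _, _⟩, hc⟩ := hp
      by_cases h1 : p.1 = k
      · subst h1; rw [if_pos rfl, if_pos hlt]
      · rcases hc with hc | hc
        · exact absurd hc h1
        · subst hc; rw [if_neg h1, if_neg (not_lt_of_gt hlt)]

end TypeBAux

namespace TypeBAux2
open TypeBAux

variable {m : ℕ}

lemma dd_eval (a t : ℝ) (A : Finset (Fin m)) (c b : Fin m → ℝ) :
    eval t (derivative (derivative (C a * (X * ∏ j ∈ A, (C (c j) * (X ^ 2 - C (b j))))))) =
      a * (2 * (∑ k ∈ A, (∏ j ∈ A.erase k, (c j * (t ^ 2 - b j))) * (c k * (2 * t)))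
        + t * ∑ k ∈ A, ((∑ l ∈ A.erase k, (∏ j ∈ (A.erase k).erase l, (c j * (t ^ 2 - b j))) *
              (c l * (2 * t))) * (c k * (2 * t))
            + (∏ j ∈ A.erase k, (c j * (t ^ 2 - b j))) * (c k * 2))) := by
  set g : Fin m → ℝ[X] := fun j => C (c j) * (X ^ 2 - C (b j)) with hg
  have hgeval : ∀ (s : ℝ) (j : Fin m), eval s (g j) = c j * (s ^ 2 - b j) := by
    intro s j; simp [hg]
  have hgd : ∀ j, derivative (g j) = C (c j) * (2 * X) := by
    intro j; simp [hg, derivative_C_mul, map_ofNat]; norm_num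
  have hQd : ∀ B : Finset (Fin m),
      derivative (∏ j ∈ B, g j) = ∑ k ∈ B, (∏ j ∈ B.erase k, g j) * (C (c k) * (2 * X)) := by
    intro B
    exact derivative_prod.trans (Finset.sum_congr rfl fun k _ => by rw [hgd]; rfl)
  have hQdeval : ∀ B : Finset (Fin m), eval t (derivative (∏ j ∈ B, g j)) =
      ∑ k ∈ B, (∏ j ∈ B.erase k, (c j * (t ^ 2 - b j))) * (c k * (2 * t)) := by
    intro B
    rw [hQd B, eval_finset_sum]
    exact Finset.sum_congr rfl fun k _ => by simp [eval_prod, hgeval]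
  have hQddeval : eval t (derivative (derivative (∏ j ∈ A, g j))) =
      ∑ k ∈ A, ((∑ l ∈ A.erase k, (∏ j ∈ (A.erase k).erase l, (c j * (t ^ 2 - b j))) *
            (c l * (2 * t))) * (c k * (2 * t))
          + (∏ j ∈ A.erase k, (c j * (t ^ 2 - b j))) * (c k * 2)) := by
    rw [hQd A, derivative_sum, eval_finset_sum]
    refine Finset.sum_congr rfl fun k _ => ?_
    rw [derivative_mul, eval_add, eval_mul, eval_mul, hQdeval (A.erase k)]
    simp [eval_prod, hgeval, derivative_C_mul, map_ofNat]
  rw [derivative_C_mul, derivative_C_mul, eval_C_mul]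
  congr 1
  rw [derivative_mul, derivative_X, one_mul, derivative_add, derivative_mul, derivative_X, one_mul]
  rw [eval_add, eval_add, eval_mul, eval_X, hQdeval A, hQddeval]
  ring

end TypeBAux2

namespace TypeBAux3
open TypeBAux TypeBAux2

variable {m : ℕ}

def u (x : Fin m → ℝ) (i j : Fin m) : ℝ := x i ^ 2 - x j ^ 2

def W (x : Fin m → ℝ) (E : Finset (Fin m)) : ℝ := ∏ p ∈ avoid E, u x p.1 p.2

def sI (i : Fin m) : ℝ := ∏ j ∈ univ.erase i, sg i j

lemma iteratedDeriv_two_eval (p : ℝ[X]) (t : ℝ) :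
    iteratedDeriv 2 (fun s => Polynomial.eval s p) t =
      Polynomial.eval t (derivative (derivative p)) := by
  rw [iteratedDeriv_succ, iteratedDeriv_one]
  have h : deriv (fun s => eval s p) = fun s => eval s (derivative p) :=
    funext fun s => Polynomial.deriv p
  rw [h, Polynomial.deriv]

lemma update_poly (x : Fin m → ℝ) (i : Fin m) (s : ℝ) :
    (∏ j, Function.update x i s j) *
      ∏ p ∈ pairs m, ((Function.update x i s) p.1 ^ 2 - (Function.update x i s) p.2 ^ 2) =
    Polynomial.eval s (C ((∏ j ∈ univ.erase i, x j) * W x {i}) *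
      (X * ∏ j ∈ univ.erase i, (C (sg i j) * (X ^ 2 - C (x j ^ 2))))) := by
  have h1 : (∏ j, Function.update x i s j) = s * ∏ j ∈ univ.erase i, x j := by
    rw [Finset.prod_update_of_mem (mem_univ i)]
    congr 1
    apply Finset.prod_congr _ fun _ _ => rfl
    ext j; simp
  have h2 : ∏ p ∈ pairs m, ((Function.update x i s) p.1 ^ 2 - (Function.update x i s) p.2 ^ 2)
      = W x {i} * ∏ j ∈ univ.erase i, (sg i j * (s ^ 2 - x j ^ 2)) := by
    rw [← avoid_empty,
      pairs_split (fun p => ((Function.update x i s) p.1 ^ 2 - (Function.update x i s) p.2 ^ 2))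
        ∅ i (notMem_empty i)]
    congr 1
    · refine Finset.prod_congr (by simp) fun p hp => ?_
      rw [mem_avoid] at hp
      simp only [mem_insert, not_or, mem_singleton] at hp
      rw [Function.update_of_ne (by simpa using hp.2.1), Function.update_of_ne (by simpa using hp.2.2)]
      rfl
    · refine Finset.prod_congr (by ext j; simp) fun j hj => ?_
      have hji : j ≠ i := by simp at hj; exact hj
      unfold sg
      split_ifs with h
      · simp [Function.update_self, Function.update_of_ne hji]
      · simp [Function.update_self, Function.update_of_ne hji]
  rw [h1, h2]
  simp only [eval_mul, eval_C, eval_X, eval_prod, eval_sub, eval_pow]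
  ring

lemma second_deriv_eq (x : Fin m → ℝ) (i : Fin m) :
    iteratedDeriv 2 (fun s => (∏ j, Function.update x i s j) *
        ∏ p ∈ pairs m, ((Function.update x i s) p.1 ^ 2 - (Function.update x i s) p.2 ^ 2)) (x i) =
    (∏ j, x j) *
      (6 * (sI i * W x {i} * ∑ k ∈ univ.erase i, ∏ j ∈ (univ.erase i).erase k, u x i j)
        + 4 * (sI i * W x {i} * x i ^ 2 *
            ∑ k ∈ univ.erase i, ∑ l ∈ (univ.erase i).erase k,
              ∏ j ∈ ((univ.erase i).erase k).erase l, u x i j)) := by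
  have hfun : (fun s => (∏ j, Function.update x i s j) *
      ∏ p ∈ pairs m, ((Function.update x i s) p.1 ^ 2 - (Function.update x i s) p.2 ^ 2))
      = fun s => Polynomial.eval s (C ((∏ j ∈ univ.erase i, x j) * W x {i}) *
        (X * ∏ j ∈ univ.erase i, (C (sg i j) * (X ^ 2 - C (x j ^ 2))))) :=
    funext (update_poly x i)
  rw [hfun, iteratedDeriv_two_eval,
    dd_eval ((∏ j ∈ univ.erase i, x j) * W x {i}) (x i) (univ.erase i)
      (fun j => sg i j) (fun j => x j ^ 2)]
  have hS1 : (∑ k ∈ univ.erase i,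
      (∏ j ∈ (univ.erase i).erase k, (sg i j * (x i ^ 2 - x j ^ 2))) * (sg i k * (2 * x i)))
      = sI i * (2 * x i) * ∑ k ∈ univ.erase i, ∏ j ∈ (univ.erase i).erase k, u x i j := by
    rw [Finset.mul_sum]
    refine Finset.sum_congr rfl fun k hk => ?_
    rw [Finset.prod_mul_distrib]
    have hmk : sg i k * ∏ j ∈ (univ.erase i).erase k, sg i j = sI i :=
      Finset.mul_prod_erase (univ.erase i) (fun j => sg i j) hk
    have hu : (∏ j ∈ (univ.erase i).erase k, (x i ^ 2 - x j ^ 2))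
        = ∏ j ∈ (univ.erase i).erase k, u x i j := rfl
    rw [hu]
    linear_combination (2 * x i * ∏ j ∈ (univ.erase i).erase k, u x i j) * hmk
  have hS2 : (∑ k ∈ univ.erase i,
      ((∑ l ∈ (univ.erase i).erase k,
          (∏ j ∈ ((univ.erase i).erase k).erase l, (sg i j * (x i ^ 2 - x j ^ 2))) *
            (sg i l * (2 * x i))) * (sg i k * (2 * x i))
        + (∏ j ∈ (univ.erase i).erase k, (sg i j * (x i ^ 2 - x j ^ 2))) * (sg i k * 2)))
      = sI i * (4 * x i ^ 2) * (∑ k ∈ univ.erase i, ∑ l ∈ (univ.erase i).erase k,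
            ∏ j ∈ ((univ.erase i).erase k).erase l, u x i j)
        + sI i * 2 * ∑ k ∈ univ.erase i, ∏ j ∈ (univ.erase i).erase k, u x i j := by
    rw [Finset.mul_sum, Finset.mul_sum, ← Finset.sum_add_distrib]
    refine Finset.sum_congr rfl fun k hk => ?_
    have hmk : sg i k * ∏ j ∈ (univ.erase i).erase k, sg i j = sI i :=
      Finset.mul_prod_erase (univ.erase i) (fun j => sg i j) hk
    have hinner : (∑ l ∈ (univ.erase i).erase k,
        (∏ j ∈ ((univ.erase i).erase k).erase l, (sg i j * (x i ^ 2 - x j ^ 2))) *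
          (sg i l * (2 * x i))) * (sg i k * (2 * x i))
      = sI i * (4 * x i ^ 2) * ∑ l ∈ (univ.erase i).erase k,
          ∏ j ∈ ((univ.erase i).erase k).erase l, u x i j := by
      rw [Finset.sum_mul, Finset.mul_sum]
      refine Finset.sum_congr rfl fun l hl => ?_
      rw [Finset.prod_mul_distrib]
      have hml : sg i l * ∏ j ∈ ((univ.erase i).erase k).erase l, sg i j
          = ∏ j ∈ (univ.erase i).erase k, sg i j :=
        Finset.mul_prod_erase ((univ.erase i).erase k) (fun j => sg i j) hl
      have hu : (∏ j ∈ ((univ.erase i).erase k).erase l, (x i ^ 2 - x j ^ 2))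
          = ∏ j ∈ ((univ.erase i).erase k).erase l, u x i j := rfl
      rw [hu]
      linear_combination (4 * x i ^ 2 * sg i k * ∏ j ∈ ((univ.erase i).erase k).erase l, u x i j) * hml
        + (4 * x i ^ 2 * ∏ j ∈ ((univ.erase i).erase k).erase l, u x i j) * hmk
    rw [hinner, Finset.prod_mul_distrib]
    have hu : (∏ j ∈ (univ.erase i).erase k, (x i ^ 2 - x j ^ 2))
        = ∏ j ∈ (univ.erase i).erase k, u x i j := rfl
    rw [hu]
    linear_combination (2 * ∏ j ∈ (univ.erase i).erase k, u x i j) * hmk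
  have hPx : x i * ∏ j ∈ univ.erase i, x j = ∏ j, x j :=
    Finset.mul_prod_erase univ x (mem_univ i)
  rw [hS1, hS2, ← hPx]
  ring

lemma cancel {a b c : ℝ} (ha : a * a = 1) (h : a * b = c) : b = a * c := by
  linear_combination a * h - b * ha

def psi (i k l : Fin m) : ℝ := sg k i * sg l i * sg l k

lemma psi_swap23 {i k l : Fin m} (hkl : k ≠ l) : psi i l k = -psi i k l := by
  unfold psi
  rw [sg_symm hkl]
  ring

lemma psi_swap12 {i k l : Fin m} (hik : i ≠ k) : psi k i l = -psi i k l := by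
  unfold psi
  rw [sg_symm hik]
  ring

/-- peel one index off the product of signs -/
lemma sg_prod_peel2 {i k : Fin m} (h : i ≠ k) :
    ∏ j ∈ (univ.erase i).erase k, sg k j = sg k i * sI k := by
  apply cancel sg_mul_self
  rw [Finset.erase_right_comm]
  exact Finset.mul_prod_erase (univ.erase k) (fun j => sg k j) (by simp [h])

lemma W_peel {i k : Fin m} (x : Fin m → ℝ) (h : i ≠ k) :
    W x {i} = W x (insert k {i}) *
      ((sg k i * sI k) * ∏ j ∈ (univ.erase i).erase k, u x k j) := by
  have hk : k ∉ ({i} : Finset (Fin m)) := by simp [Ne.symm h]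
  have hset : univ \ insert k ({i} : Finset (Fin m)) = (univ.erase i).erase k := by
    ext j; simp [and_comm]
  have hd : ∀ j ∈ (univ.erase i).erase k,
      (if k < j then u x k j else u x j k) = sg k j * u x k j := by
    intro j hj
    unfold sg u
    split_ifs <;> ring
  unfold W
  rw [pairs_split (fun p => u x p.1 p.2) {i} k hk]
  congr 1
  rw [hset, Finset.prod_congr rfl hd, Finset.prod_mul_distrib, sg_prod_peel2 h]

lemma t_antisymm {i k : Fin m} (x : Fin m → ℝ) (h : i ≠ k) :
    sI i * W x {i} * ∏ j ∈ (univ.erase i).erase k, u x i j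
      = -(sI k * W x {k} * ∏ j ∈ (univ.erase k).erase i, u x k j) := by
  rw [W_peel x h, W_peel x h.symm]
  have h1 : insert i ({k} : Finset (Fin m)) = insert k {i} := Finset.pair_comm i k
  have h2 : (univ.erase k).erase i = (univ.erase i).erase k := Finset.erase_right_comm
  have h3 : sg i k = -sg k i := sg_symm h
  rw [h1, h2, h3]
  ring

lemma T2_zero (x : Fin m → ℝ) :
    ∑ i, ∑ k ∈ univ.erase i,
      (sI i * W x {i} * ∏ j ∈ (univ.erase i).erase k, u x i j) = 0 := by
  set f : Fin m → Fin m → ℝ :=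
    fun i k => sI i * W x {i} * ∏ j ∈ (univ.erase i).erase k, u x i j with hf
  have hcomm : (∑ i, ∑ k ∈ univ.erase i, f i k) = ∑ k, ∑ i ∈ univ.erase k, f i k :=
    Finset.sum_comm' (by intro a b; simp [mem_erase]; tauto)
  have hneg : (∑ i, ∑ k ∈ univ.erase i, f i k) = -∑ i, ∑ k ∈ univ.erase i, f i k := by
    nth_rewrite 1 [hcomm]
    rw [← Finset.sum_neg_distrib]
    refine Finset.sum_congr rfl fun k _ => ?_
    rw [← Finset.sum_neg_distrib]
    refine Finset.sum_congr rfl fun i hi => ?_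
    have hik : i ≠ k := by simp at hi; exact hi
    rw [hf]
    simpa using t_antisymm x hik
  linarith

lemma sg_prod_peel3 {i k l : Fin m} (hik : i ≠ k) (hil : i ≠ l) (hkl : k ≠ l) :
    ∏ j ∈ ((univ.erase i).erase k).erase l, sg l j = sg l i * (sg l k * sI l) := by
  have hset : ((univ.erase i).erase k).erase l = ((univ.erase l).erase i).erase k := by
    ext j; simp; tauto
  have hk : k ∈ (univ.erase l).erase i := by simp [Ne.symm hik, hkl]
  have hI : i ∈ univ.erase l := by simp [hil]
  have h1 : sg l k * ∏ j ∈ ((univ.erase l).erase i).erase k, sg l j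
      = ∏ j ∈ (univ.erase l).erase i, sg l j := Finset.mul_prod_erase _ _ hk
  have h2 : sg l i * ∏ j ∈ (univ.erase l).erase i, sg l j = sI l :=
    Finset.mul_prod_erase _ _ hI
  have hQ : ∏ j ∈ (univ.erase l).erase i, sg l j = sg l i * sI l := cancel sg_mul_self h2
  have hP : ∏ j ∈ ((univ.erase l).erase i).erase k, sg l j
      = sg l k * ∏ j ∈ (univ.erase l).erase i, sg l j := cancel sg_mul_self h1
  rw [hset, hP, hQ]
  ring

lemma W_peel3 {i k l : Fin m} (x : Fin m → ℝ) (hik : i ≠ k) (hil : i ≠ l) (hkl : k ≠ l) :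
    W x (insert k {i}) = W x (insert l (insert k {i})) *
      ((sg l i * (sg l k * sI l)) * ∏ j ∈ ((univ.erase i).erase k).erase l, u x l j) := by
  have hl : l ∉ (insert k ({i} : Finset (Fin m))) := by simp [Ne.symm hil, Ne.symm hkl]
  have hset : univ \ insert l (insert k ({i} : Finset (Fin m)))
      = ((univ.erase i).erase k).erase l := by
    ext j; simp
  have hd : ∀ j ∈ ((univ.erase i).erase k).erase l,
      (if l < j then u x l j else u x j l) = sg l j * u x l j := by
    intro j hj
    unfold sg u
    split_ifs <;> ring
  unfold W
  rw [pairs_split (fun p => u x p.1 p.2) (insert k {i}) l hl]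
  congr 1
  rw [hset, Finset.prod_congr rfl hd, Finset.prod_mul_distrib, sg_prod_peel3 hik hil hkl]

/-- the symmetric part of a triple term -/
def SY (x : Fin m → ℝ) (i k l : Fin m) : ℝ :=
  sI i * sI k * sI l * W x (insert l (insert k {i})) *
    ∏ j ∈ ((univ.erase i).erase k).erase l, (u x i j * u x k j * u x l j)

lemma g3_reduce {i k l : Fin m} (x : Fin m → ℝ) (hik : i ≠ k) (hil : i ≠ l) (hkl : k ≠ l) :
    sI i * W x {i} * x i ^ 2 * ∏ j ∈ ((univ.erase i).erase k).erase l, u x i j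
      = psi i k l * x i ^ 2 * u x k l * SY x i k l := by
  have hl : l ∈ (univ.erase i).erase k := by simp [Ne.symm hil, Ne.symm hkl]
  have hpeelu : ∏ j ∈ (univ.erase i).erase k, u x k j
      = u x k l * ∏ j ∈ ((univ.erase i).erase k).erase l, u x k j :=
    (Finset.mul_prod_erase ((univ.erase i).erase k) (fun j => u x k j) hl).symm
  rw [W_peel x hik, W_peel3 x hik hil hkl, hpeelu]
  unfold SY psi
  have h3 : ∏ j ∈ ((univ.erase i).erase k).erase l, (u x i j * u x k j * u x l j)
      = (∏ j ∈ ((univ.erase i).erase k).erase l, u x i j) *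
        (∏ j ∈ ((univ.erase i).erase k).erase l, u x k j) *
        (∏ j ∈ ((univ.erase i).erase k).erase l, u x l j) := by
    rw [Finset.prod_mul_distrib, Finset.prod_mul_distrib]
  rw [h3]
  ring

lemma SY_swap23 {i k l : Fin m} (x : Fin m → ℝ) : SY x i l k = SY x i k l := by
  unfold SY
  have h1 : insert k (insert l ({i} : Finset (Fin m))) = insert l (insert k {i}) := by
    ext j; simp; tauto
  have h2 : ((univ.erase i).erase l).erase k = ((univ.erase i).erase k).erase l :=
    Finset.erase_right_comm
  rw [h1, h2]
  rw [show (∏ j ∈ ((univ.erase i).erase k).erase l, (u x i j * u x l j * u x k j))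
      = ∏ j ∈ ((univ.erase i).erase k).erase l, (u x i j * u x k j * u x l j) from
    Finset.prod_congr rfl fun j _ => by ring]
  ring

lemma SY_swap12 {i k l : Fin m} (x : Fin m → ℝ) : SY x k i l = SY x i k l := by
  unfold SY
  have h1 : insert l (insert i ({k} : Finset (Fin m))) = insert l (insert k {i}) := by
    ext j; simp; tauto
  have h2 : ((univ.erase k).erase i).erase l = ((univ.erase i).erase k).erase l := by
    rw [Finset.erase_right_comm (a := k) (b := i)]
  rw [h1, h2]
  rw [show (∏ j ∈ ((univ.erase i).erase k).erase l, (u x k j * u x i j * u x l j))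
      = ∏ j ∈ ((univ.erase i).erase k).erase l, (u x i j * u x k j * u x l j) from
    Finset.prod_congr rfl fun j _ => by ring]
  ring

/-- index set of ordered distinct triples -/
def T3set (m : ℕ) : Finset (Fin m × Fin m × Fin m) :=
  univ.filter fun t => t.1 ≠ t.2.1 ∧ t.1 ≠ t.2.2 ∧ t.2.1 ≠ t.2.2

lemma sum_erase_eq (s : Finset (Fin m)) (a : Fin m) (f : Fin m → ℝ) :
    ∑ b ∈ s.erase a, f b = ∑ b ∈ s, if b ≠ a then f b else 0 := by
  rw [← Finset.filter_ne', Finset.sum_filter]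

lemma sum_T3 (f : Fin m → Fin m → Fin m → ℝ) :
    ∑ t ∈ T3set m, f t.1 t.2.1 t.2.2
      = ∑ i, ∑ k ∈ univ.erase i, ∑ l ∈ (univ.erase i).erase k, f i k l := by
  rw [T3set, Finset.sum_filter, Fintype.sum_prod_type]
  refine Finset.sum_congr rfl fun i _ => ?_
  rw [Fintype.sum_prod_type, sum_erase_eq]
  refine Finset.sum_congr rfl fun k _ => ?_
  by_cases hk : k ≠ i
  · rw [if_pos hk, sum_erase_eq, sum_erase_eq]
    refine Finset.sum_congr rfl fun l _ => ?_
    split_ifs <;> tauto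
  · rw [if_neg hk]
    refine Finset.sum_eq_zero fun l _ => ?_
    rw [if_neg (by tauto)]

lemma sum_T3_swap23 (g : Fin m → Fin m → Fin m → ℝ) :
    ∑ t ∈ T3set m, g t.1 t.2.1 t.2.2 = ∑ t ∈ T3set m, g t.1 t.2.2 t.2.1 := by
  refine Finset.sum_nbij' (fun t => (t.1, t.2.2, t.2.1)) (fun t => (t.1, t.2.2, t.2.1))
    ?_ ?_ ?_ ?_ ?_ <;> intro t ht <;>
    simp only [T3set, mem_filter, mem_univ, true_and] at * <;> tauto

lemma sum_T3_swap12 (g : Fin m → Fin m → Fin m → ℝ) :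
    ∑ t ∈ T3set m, g t.1 t.2.1 t.2.2 = ∑ t ∈ T3set m, g t.2.1 t.1 t.2.2 := by
  refine Finset.sum_nbij' (fun t => (t.2.1, t.1, t.2.2)) (fun t => (t.2.1, t.1, t.2.2))
    ?_ ?_ ?_ ?_ ?_ <;> intro t ht <;>
    simp only [T3set, mem_filter, mem_univ, true_and] at * <;> tauto

lemma T3_zero (x : Fin m → ℝ) :
    ∑ i, ∑ k ∈ univ.erase i, ∑ l ∈ (univ.erase i).erase k,
      (sI i * W x {i} * x i ^ 2 * ∏ j ∈ ((univ.erase i).erase k).erase l, u x i j) = 0 := by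
  set q : Fin m → Fin m → Fin m → ℝ :=
    fun i k l => psi i k l * x i ^ 2 * x k ^ 2 * SY x i k l with hq
  have hdist : ∀ t ∈ T3set m, t.1 ≠ t.2.1 ∧ t.1 ≠ t.2.2 ∧ t.2.1 ≠ t.2.2 := by
    intro t ht
    simpa [T3set] using ht
  have hqzero : ∑ t ∈ T3set m, q t.1 t.2.1 t.2.2 = 0 := by
    have h1 : ∑ t ∈ T3set m, q t.1 t.2.1 t.2.2
        = -∑ t ∈ T3set m, q t.1 t.2.1 t.2.2 := by
      nth_rewrite 1 [sum_T3_swap12 q]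
      rw [← Finset.sum_neg_distrib]
      refine Finset.sum_congr rfl fun t ht => ?_
      obtain ⟨h12, h13, h23⟩ := hdist t ht
      rw [hq]
      simp only
      rw [psi_swap12 (Ne.symm h12), SY_swap12 x]
      ring
    linarith
  rw [← sum_T3]
  have hsplit : ∑ t ∈ T3set m, (fun i k l =>
      sI i * W x {i} * x i ^ 2 * ∏ j ∈ ((univ.erase i).erase k).erase l, u x i j)
        t.1 t.2.1 t.2.2
      = ∑ t ∈ T3set m, (q t.1 t.2.1 t.2.2 + q t.1 t.2.2 t.2.1) := by
    refine Finset.sum_congr rfl fun t ht => ?_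
    obtain ⟨h12, h13, h23⟩ := hdist t ht
    simp only
    rw [g3_reduce x h12 h13 h23, hq]
    simp only
    rw [psi_swap23 (Ne.symm h23), SY_swap23 x]  -- careful: q t.1 t.2.2 t.2.1 = psi i l k ...
    unfold u
    ring
  rw [hsplit, Finset.sum_add_distrib, ← sum_T3_swap23 q, hqzero]
  norm_num

end TypeBAux3


/-- The polynomial `(∏ i, y i) * ∏_{i<j} (y i ^ 2 - y j ^ 2)` (the product of the
type `B_m` positive roots) is harmonic. -/
theorem typeB_product_harmonic (m : ℕ) (x : Fin m → ℝ) :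
    laplacian
      (fun y : Fin m → ℝ =>
        (∏ i, y i) *
          ∏ p ∈ Finset.univ.filter fun p : Fin m × Fin m => p.1 < p.2,
            (y p.1 ^ 2 - y p.2 ^ 2)) x = 0 := by
  open TypeBAux TypeBAux2 TypeBAux3 in
  have hp : (Finset.univ.filter fun p : Fin m × Fin m => p.1 < p.2) = pairs m := rfl
  unfold laplacian
  simp only [hp]
  rw [Finset.sum_congr rfl fun i (_ : i ∈ univ) => TypeBAux3.second_deriv_eq x i]
  have h2 : ∑ i, (TypeBAux3.sI i * TypeBAux3.W x {i} *
      ∑ k ∈ univ.erase i, ∏ j ∈ (univ.erase i).erase k, TypeBAux3.u x i j) = 0 := by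
    calc ∑ i, (TypeBAux3.sI i * TypeBAux3.W x {i} *
        ∑ k ∈ univ.erase i, ∏ j ∈ (univ.erase i).erase k, TypeBAux3.u x i j)
        = ∑ i, ∑ k ∈ univ.erase i, (TypeBAux3.sI i * TypeBAux3.W x {i} *
            ∏ j ∈ (univ.erase i).erase k, TypeBAux3.u x i j) :=
          Finset.sum_congr rfl fun i _ => Finset.mul_sum _ _ _
      _ = 0 := TypeBAux3.T2_zero x
  have h3 : ∑ i, (TypeBAux3.sI i * TypeBAux3.W x {i} * x i ^ 2 *
      ∑ k ∈ univ.erase i, ∑ l ∈ (univ.erase i).erase k,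
        ∏ j ∈ ((univ.erase i).erase k).erase l, TypeBAux3.u x i j) = 0 := by
    calc ∑ i, (TypeBAux3.sI i * TypeBAux3.W x {i} * x i ^ 2 *
        ∑ k ∈ univ.erase i, ∑ l ∈ (univ.erase i).erase k,
          ∏ j ∈ ((univ.erase i).erase k).erase l, TypeBAux3.u x i j)
        = ∑ i, ∑ k ∈ univ.erase i, ∑ l ∈ (univ.erase i).erase k,
            (TypeBAux3.sI i * TypeBAux3.W x {i} * x i ^ 2 *
              ∏ j ∈ ((univ.erase i).erase k).erase l, TypeBAux3.u x i j) := by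
          refine Finset.sum_congr rfl fun i _ => ?_
          rw [Finset.mul_sum]
          exact Finset.sum_congr rfl fun k _ => Finset.mul_sum _ _ _
      _ = 0 := TypeBAux3.T3_zero x
  rw [← Finset.mul_sum]
  have hsum : ∑ i, (6 * (TypeBAux3.sI i * TypeBAux3.W x {i} *
      ∑ k ∈ univ.erase i, ∏ j ∈ (univ.erase i).erase k, TypeBAux3.u x i j)
    + 4 * (TypeBAux3.sI i * TypeBAux3.W x {i} * x i ^ 2 *
      ∑ k ∈ univ.erase i, ∑ l ∈ (univ.erase i).erase k,
        ∏ j ∈ ((univ.erase i).erase k).erase l, TypeBAux3.u x i j))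
      = 6 * (∑ i, (TypeBAux3.sI i * TypeBAux3.W x {i} *
          ∑ k ∈ univ.erase i, ∏ j ∈ (univ.erase i).erase k, TypeBAux3.u x i j))
        + 4 * (∑ i, (TypeBAux3.sI i * TypeBAux3.W x {i} * x i ^ 2 *
          ∑ k ∈ univ.erase i, ∑ l ∈ (univ.erase i).erase k,
            ∏ j ∈ ((univ.erase i).erase k).erase l, TypeBAux3.u x i j)) := by
    rw [Finset.sum_add_distrib, ← Finset.mul_sum, ← Finset.mul_sum]
  rw [hsum, h2, h3]
  ring
end
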